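/- Let L be a completely distributive DeMorgan algebra and 𝒯 : L^X → L a function. Then 𝒯 is an L-fuzzy topology on X if and only if for each non-zero coprime element a ∈ J(L), the family 𝒯_[a] = {A ∈ L^X : 𝒯(A) ≥ a} is an L-topology on X (i.e., contains ⊥̲ and ⊤̲, and is closed under arbitrary suprema and finite infima). -/

import Mathlib

namespace LFuzzy

/-- A (complete) DeMorgan structure on a complete lattice: an order-reversing involution. -/
structure DeMorgan (L : Type*) [CompleteLattice L] where
  compl : L → L
  compl_antitone : ∀ a b : L, a ≤ b → compl b ≤ compl a
  compl_involutive : ∀ a : L, compl (compl a) = a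

variable {L X Y : Type*} [CompleteLattice L]

/-- Pointwise DeMorgan complement of an L-fuzzy subset. -/
def pcompl (c : DeMorgan L) (U : X → L) : X → L := fun x => c.compl (U x)

/-- An L-fuzzy topology on X. -/
def IsTopology (T : (X → L) → L) : Prop :=
  T ⊥ = ⊤ ∧ T ⊤ = ⊤ ∧ (∀ U V : X → L, T U ⊓ T V ≤ T (U ⊓ V)) ∧
    ∀ S : Set (X → L), (⨅ U ∈ S, T U) ≤ T (sSup S)

/-- r-fuzzy closure operator. -/
def cl (c : DeMorgan L) (T : (X → L) → L) (U : X → L) (r : L) : X → L :=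
  sInf {V | U ≤ V ∧ r ≤ T (pcompl c V)}

/-- r-fuzzy interior operator. -/
def intr (T : (X → L) → L) (U : X → L) (r : L) : X → L :=
  sSup {V | V ≤ U ∧ r ≤ T V}

/-- r-fuzzy Semi-Preopen. -/
def SPO (c : DeMorgan L) (T : (X → L) → L) (U : X → L) (r : L) : Prop :=
  U ≤ cl c T (intr T (cl c T U r) r) r

/-- r-fuzzy Semi-Preclosed. -/
def SPC (c : DeMorgan L) (T : (X → L) → L) (U : X → L) (r : L) : Prop :=
  intr T (cl c T (intr T U r) r) r ≤ U

/-- Semi-Preinterior. -/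
def spInt (c : DeMorgan L) (T : (X → L) → L) (V : X → L) (r : L) : X → L :=
  sSup {W | W ≤ V ∧ SPO c T W r}

/-- Semi-Preclosure. -/
def spCl (c : DeMorgan L) (T : (X → L) → L) (V : X → L) (r : L) : X → L :=
  sInf {W | V ≤ W ∧ SPC c T W r}

/-- r-fuzzy θ-closure. -/
def thCl (c : DeMorgan L) (T : (X → L) → L) (U : X → L) (r : L) : X → L :=
  sInf {V | U ≤ intr T V r ∧ r ≤ T (pcompl c V)}

/-- r-fuzzy θ-interior. -/
def thInt (c : DeMorgan L) (T : (X → L) → L) (U : X → L) (r : L) : X → L :=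
  sSup {V | cl c T V r ≤ U ∧ r ≤ T V}

/-- Image L-fuzzy set operator induced by f. -/
def im (f : X → Y) (U : X → L) : Y → L := fun y => ⨆ x, ⨆ _ : f x = y, U x

/-- Preimage L-fuzzy set operator induced by f. -/
def pre (f : X → Y) (V : Y → L) : X → L := fun x => V (f x)

/-- L-fuzzy weakly open function. -/
def WeaklyOpen (c : DeMorgan L) (T₁ : (X → L) → L) (T₂ : (Y → L) → L) (f : X → Y) : Prop :=
  ∀ (U : X → L) (r : L), r ≠ ⊥ → r ≤ T₁ U →
    im f U ≤ intr T₂ (im f (cl c T₁ U r)) r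

/-- L-fuzzy weakly Semi-Preopen function. -/
def WeaklySPOpen (c : DeMorgan L) (T₁ : (X → L) → L) (T₂ : (Y → L) → L) (f : X → Y) : Prop :=
  ∀ (U : X → L) (r : L), r ≠ ⊥ → r ≤ T₁ U →
    im f U ≤ spInt c T₂ (im f (cl c T₁ U r)) r

/-- L-fuzzy weakly Semi-Preclosed function. -/
def WeaklySPClosed (c : DeMorgan L) (T₁ : (X → L) → L) (T₂ : (Y → L) → L) (f : X → Y) : Prop :=
  ∀ (U : X → L) (r : L), r ≠ ⊥ → r ≤ T₁ (pcompl c U) →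
    spCl c T₂ (im f (intr T₁ U r)) r ≤ im f U

/-- L-fuzzy strongly continuous function. -/
def StronglyCont (c : DeMorgan L) (T₁ : (X → L) → L) (f : X → Y) : Prop :=
  ∀ (U : X → L) (r : L), r ≠ ⊥ → im f (cl c T₁ U r) ≤ im f U

/-- Quasi-coincidence of two L-fuzzy subsets. -/
def Quasi (c : DeMorgan L) (A B : X → L) : Prop := ∃ x, ¬ A x ≤ c.compl (B x)

end LFuzzy

open LFuzzy

variable {L X Y : Type*}

/-- An L-topology on X in the sense of Chang: a subfamily of L^X containing ⊥ and ⊤,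
closed under arbitrary suprema and finite infima. -/
def IsLTopology [CompleteLattice L] (τ : Set (X → L)) : Prop :=
  (⊥ : X → L) ∈ τ ∧ (⊤ : X → L) ∈ τ ∧ (∀ S : Set (X → L), S ⊆ τ → sSup S ∈ τ) ∧
    ∀ U ∈ τ, ∀ V ∈ τ, U ⊓ V ∈ τ


section Density

variable {α : Type*} [CompletelyDistribLattice α]

/-- `x` is way below `y` (tested against arbitrary nonempty directed covers). -/
def WB (x y : α) : Prop :=
  ∀ D : Set α, D.Nonempty → DirectedOn (· ≤ ·) D → y ≤ sSup D → ∃ d ∈ D, x ≤ d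

lemma WB.le {x y : α} (h : WB x y) : x ≤ y := by
  obtain ⟨d, hd, hxd⟩ := h {y} ⟨y, rfl⟩ (directedOn_singleton y) (by simp)
  cases hd
  exact hxd

lemma WB.mono_left {x' x y : α} (hx : x' ≤ x) (h : WB x y) : WB x' y :=
  fun D h1 h2 h3 => (h D h1 h2 h3).imp fun d ⟨hd, hxd⟩ => ⟨hd, hx.trans hxd⟩

lemma WB.mono_right {x y y' : α} (h : WB x y) (hy : y ≤ y') : WB x y' :=
  fun D h1 h2 h3 => h D h1 h2 (hy.trans h3)

lemma WB.bot {y : α} : WB (⊥ : α) y :=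
  fun D h1 _ _ => h1.imp fun d hd => ⟨hd, bot_le⟩

lemma WB.sup {x₁ x₂ y : α} (h1 : WB x₁ y) (h2 : WB x₂ y) : WB (x₁ ⊔ x₂) y := by
  intro D hne hdir hcov
  obtain ⟨d₁, hd₁, hx₁⟩ := h1 D hne hdir hcov
  obtain ⟨d₂, hd₂, hx₂⟩ := h2 D hne hdir hcov
  obtain ⟨d₃, hd₃, h₁₃, h₂₃⟩ := hdir d₁ hd₁ d₂ hd₂
  exact ⟨d₃, hd₃, sup_le (hx₁.trans h₁₃) (hx₂.trans h₂₃)⟩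

/-- Raney's lemma: every element is the sup of the elements way below it. -/
lemma le_sSup_WB (a : α) : a ≤ sSup {x : α | WB x a} := by
  have key : (⨅ S : {S : Set α // a ≤ sSup S}, ⨆ s : S.1, (s : α))
      = ⨆ g : ∀ S : {S : Set α // a ≤ sSup S}, S.1, ⨅ S, ((g S : α)) := iInf_iSup_eq
  have lhs : a = ⨅ S : {S : Set α // a ≤ sSup S}, ⨆ s : S.1, (s : α) := by
    apply le_antisymm
    · exact le_iInf fun S => by rw [← sSup_eq_iSup']; exact S.2
    · refine iInf_le_of_le ⟨{a}, by simp⟩ ?_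
      rw [← sSup_eq_iSup']; simp
  calc a = _ := lhs
    _ = _ := key
    _ ≤ sSup {x : α | WB x a} := by
      apply iSup_le
      intro g
      apply le_sSup
      intro D hne hdir hcov
      exact ⟨g ⟨D, hcov⟩, (g ⟨D, hcov⟩).2, iInf_le (fun S : {S : Set α // a ≤ sSup S} => (g S : α)) ⟨D, hcov⟩⟩

lemma exists_WB_not_le {a b : α} (h : ¬ a ≤ b) : ∃ x, WB x a ∧ ¬ x ≤ b := by
  by_contra hc
  push_neg at hc
  exact h ((le_sSup_WB a).trans (sSup_le fun x hx => hc x hx))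

lemma WB.interpolate {x z : α} (h : WB x z) : ∃ y, WB x y ∧ WB y z := by
  set D : Set α := {d | ∃ e, WB d e ∧ WB e z} with hD
  have hne : D.Nonempty := ⟨⊥, ⊥, WB.bot, WB.bot⟩
  have hdir : DirectedOn (· ≤ ·) D := by
    rintro d₁ ⟨e₁, hd₁, he₁⟩ d₂ ⟨e₂, hd₂, he₂⟩
    exact ⟨d₁ ⊔ d₂, ⟨e₁ ⊔ e₂, WB.sup (hd₁.mono_right le_sup_left) (hd₂.mono_right le_sup_right),
      WB.sup he₁ he₂⟩, le_sup_left, le_sup_right⟩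
  have hcov : z ≤ sSup D := by
    refine (le_sSup_WB z).trans (sSup_le fun e he => ?_)
    exact (le_sSup_WB e).trans (sSup_le fun d hd => le_sSup ⟨e, hd, he⟩)
  obtain ⟨d, ⟨e, hde, hez⟩, hxd⟩ := h D hne hdir hcov
  exact ⟨e, (WB.mono_left hxd hde), hez⟩

/-- Separation by a meet-prime element (Hofmann–Lawson style argument). -/
lemma exists_prime_sep {a b : α} (h : ¬ a ≤ b) :
    ∃ p, b ≤ p ∧ ¬ a ≤ p ∧ p ≠ ⊤ ∧ ∀ x y : α, x ⊓ y ≤ p → x ≤ p ∨ y ≤ p := by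
  -- build the descending sequence
  obtain ⟨c₀, hc₀a, hc₀b⟩ := exists_WB_not_le h
  have step : ∀ x : {x : α // ¬ x ≤ b}, ∃ y : α, WB y x.1 ∧ ¬ y ≤ b :=
    fun x => exists_WB_not_le x.2
  choose f hf1 hf2 using step
  let g : {x : α // ¬ x ≤ b} → {x : α // ¬ x ≤ b} := fun x => ⟨f x, hf2 x⟩
  let c : ℕ → α := fun n => (g^[n] ⟨c₀, hc₀b⟩).1
  have hcb : ∀ n, ¬ c n ≤ b := fun n => (g^[n] ⟨c₀, hc₀b⟩).2
  have hc0 : WB (c 0) a := hc₀a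
  have hcs : ∀ n, WB (c (n + 1)) (c n) := by
    intro n
    have heq : c (n + 1) = f (g^[n] ⟨c₀, hc₀b⟩) := by
      show ((g^[n+1] ⟨c₀, hc₀b⟩ : {x : α // ¬ x ≤ b}) : α) = _
      rw [Function.iterate_succ_apply']
    rw [heq]
    exact hf1 _
  set F : Set α := {z | ∃ n, WB (c n) z} with hF
  have hFup : ∀ z ∈ F, ∀ z', z ≤ z' → z' ∈ F := by
    rintro z ⟨n, hn⟩ z' hzz'
    exact ⟨n, hn.mono_right hzz'⟩
  have haF : a ∈ F := ⟨0, hc0⟩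
  have hbF : b ∉ F := by rintro ⟨n, hn⟩; exact hcb n hn.le
  have hFinf : ∀ z₁ ∈ F, ∀ z₂ ∈ F, z₁ ⊓ z₂ ∈ F := by
    rintro z₁ ⟨n, hn⟩ z₂ ⟨m, hm⟩
    refine ⟨max n m + 1, (hcs (max n m)).mono_right (le_inf ?_ ?_)⟩
    · -- c (max n m) ≤ z₁
      calc c (max n m) ≤ c n := by
            clear hn hm
            induction (max n m), (le_max_left n m) using Nat.le_induction with
            | base => exact le_rfl
            | succ k hk ih => exact (hcs k).le.trans ih
        _ ≤ z₁ := hn.le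
    · calc c (max n m) ≤ c m := by
            clear hn hm
            induction (max n m), (le_max_right n m) using Nat.le_induction with
            | base => exact le_rfl
            | succ k hk ih => exact (hcs k).le.trans ih
        _ ≤ z₂ := hm.le
  -- Zorn's lemma on elements above b avoiding F
  set P : Set α := {z | b ≤ z ∧ z ∉ F} with hP
  have hbP : b ∈ P := ⟨le_rfl, hbF⟩
  have hchain : ∀ C ⊆ P, IsChain (· ≤ ·) C → ∀ y ∈ C, ∃ ub ∈ P, ∀ z ∈ C, z ≤ ub := by
    intro C hCP hC y hy
    refine ⟨sSup C, ⟨(hCP hy).1.trans (le_sSup hy), ?_⟩, fun z hz => le_sSup hz⟩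
    rintro ⟨n, hn⟩
    obtain ⟨z, hzC, hcz⟩ := hn C ⟨y, hy⟩ hC.directedOn le_rfl
    exact (hCP hzC).2 ⟨n + 1, (hcs n).mono_right hcz⟩
  obtain ⟨p, hbp, hpmax⟩ := zorn_le_nonempty₀ P hchain b hbP
  have hpP : p ∈ P := hpmax.1
  · refine ⟨p, hpP.1, ?_, ?_, ?_⟩
    · intro hap
      exact hpP.2 (hFup a haF p hap)
    · rintro rfl
      exact hpP.2 (hFup a haF ⊤ le_top)
    · intro x y hxy
      by_contra hcon
      push_neg at hcon
      obtain ⟨hx, hy'⟩ := hcon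
      have hxF : p ⊔ x ∈ F := by
        by_contra hxF
        have : p ⊔ x ≤ p := hpmax.2 ⟨hpP.1.trans le_sup_left, hxF⟩ le_sup_left
        exact hx (le_sup_right.trans this)
      have hyF : p ⊔ y ∈ F := by
        by_contra hyF
        have : p ⊔ y ≤ p := hpmax.2 ⟨hpP.1.trans le_sup_left, hyF⟩ le_sup_left
        exact hy' (le_sup_right.trans this)
      have : (p ⊔ x) ⊓ (p ⊔ y) ∈ F := hFinf _ hxF _ hyF
      rw [← sup_inf_left, sup_eq_left.2 hxy] at this
      exact hpP.2 this

/-- Separation by a coprime element: the dual statement. -/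
lemma exists_coprime_sep {b t : α} (h : ¬ b ≤ t) :
    ∃ p : α, p ≤ b ∧ ¬ p ≤ t ∧ p ≠ ⊥ ∧ ∀ x y : α, p ≤ x ⊔ y → p ≤ x ∨ p ≤ y := by
  obtain ⟨p, h1, h2, h3, h4⟩ := exists_prime_sep (α := αᵒᵈ)
    (a := OrderDual.toDual t) (b := OrderDual.toDual b) h
  refine ⟨OrderDual.ofDual p, h1, h2, fun hb => h3 (congrArg OrderDual.toDual hb), fun x y hxy =>
    h4 (OrderDual.toDual x) (OrderDual.toDual y) hxy⟩

lemma le_of_coprime_le {b t : α}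
    (H : ∀ p : α, p ≠ ⊥ → (∀ x y : α, p ≤ x ⊔ y → p ≤ x ∨ p ≤ y) → p ≤ b → p ≤ t) :
    b ≤ t := by
  by_contra h
  obtain ⟨p, hpb, hpt, hp0, hpc⟩ := exists_coprime_sep h
  exact hpt (H p hp0 hpc hpb)

end Density

theorem stmt4 [CompletelyDistribLattice L] (c : DeMorgan L) (T : (X → L) → L) :
    IsTopology T ↔
      ∀ a : L, (a ≠ ⊥ ∧ ∀ b₁ b₂ : L, a ≤ b₁ ⊔ b₂ → a ≤ b₁ ∨ a ≤ b₂) →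
        IsLTopology {A : X → L | a ≤ T A} := by
  constructor
  · rintro ⟨h1, h2, h3, h4⟩ a _
    refine ⟨?_, ?_, ?_, ?_⟩
    · show a ≤ T ⊥
      rw [h1]; exact le_top
    · show a ≤ T ⊤
      rw [h2]; exact le_top
    · intro S hS
      refine le_trans ?_ (h4 S)
      exact le_iInf₂ fun U hU => hS hU
    · intro U hU V hV
      exact le_trans (le_inf hU hV) (h3 U V)
  · intro H
    refine ⟨?_, ?_, ?_, ?_⟩
    · refine le_antisymm le_top (le_of_coprime_le fun p hp0 hpc _ => (H p ⟨hp0, hpc⟩).1)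
    · refine le_antisymm le_top (le_of_coprime_le fun p hp0 hpc _ => (H p ⟨hp0, hpc⟩).2.1)
    · intro U V
      refine le_of_coprime_le fun p hp0 hpc hple => ?_
      exact (H p ⟨hp0, hpc⟩).2.2.2 U (hple.trans inf_le_left) V (hple.trans inf_le_right)
    · intro S
      refine le_of_coprime_le fun p hp0 hpc hple => ?_
      exact (H p ⟨hp0, hpc⟩).2.2.1 S fun U hU => hple.trans (iInf₂_le U hU)
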